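/- (Counting identity for α_L, equations (19)/(22)/(26)) Let L ≥ 1 and N ≥ 0 be integers, let m_1, …, m_L and μ be integers with 0 ≤ μ ≤ m_j ≤ N for every j. Then the number of L-tuples (U_1, …, U_L) of subsets of Fin N with |U_j| = m_j for every j and |⋂_{j=1}^{L} U_j| = μ equals C(N,μ) · Σ_{l=0}^{min_j(m_j−μ)} (−1)^l C(N−μ, l) ∏_{j=1}^{L} C(N−μ−l, m_j−μ−l), where C(a,b) denotes the binomial coefficient. -/

import Mathlib

open scoped Classical

/-- Minimum of `m j` over the (nonempty) index type `Fin L`. -/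
def minOver {L : ℕ} (hL : 0 < L) (m : Fin L → ℕ) : ℕ :=
  Finset.univ.inf' ⟨⟨0, hL⟩, Finset.mem_univ _⟩ m

open Finset

noncomputable def Bcard (N L : ℕ) (m : Fin L → ℕ) (T : Finset (Fin N)) : ℕ :=
  (Finset.univ.filter (fun U : Fin L → Finset (Fin N) =>
    ∀ j, (U j).card = m j ∧ T ⊆ U j)).card

noncomputable def Acard (N L : ℕ) (m : Fin L → ℕ) (T : Finset (Fin N)) : ℕ :=
  (Finset.univ.filter (fun U : Fin L → Finset (Fin N) =>
    (∀ j, (U j).card = m j) ∧ Finset.univ.inf U = T)).card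

lemma card_supersets {N : ℕ} (T : Finset (Fin N)) (k : ℕ) (hT : T.card ≤ k) :
    (Finset.univ.filter (fun V : Finset (Fin N) => V.card = k ∧ T ⊆ V)).card
      = (N - T.card).choose (k - T.card) := by
  classical
  have hcard : (Finset.univ \ T).card = N - T.card := by
    rw [Finset.card_sdiff_of_subset (Finset.subset_univ _), Finset.card_univ, Fintype.card_fin]
  rw [← hcard, ← Finset.card_powersetCard (k - T.card) (Finset.univ \ T)]
  · apply Finset.card_bij' (fun V _ => V \ T) (fun W _ => W ∪ T)
    · intro V hV
      simp only [mem_filter, mem_univ, true_and] at hV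
      rw [Finset.mem_powersetCard]
      exact ⟨Finset.sdiff_subset_sdiff (Finset.subset_univ _) le_rfl,
        by rw [Finset.card_sdiff_of_subset hV.2, hV.1]⟩
    · intro W hW
      rw [Finset.mem_powersetCard] at hW
      simp only [mem_filter, mem_univ, true_and]
      have hdisj : Disjoint W T := by
        intro x hx1 hx2 a ha
        have := hx1 ha
        have h2 := hx2 ha
        have := hW.1 this
        simp [Finset.mem_sdiff] at this
        exact absurd h2 this
      constructor
      · rw [Finset.card_union_of_disjoint hdisj, hW.2]
        omega
      · exact Finset.subset_union_right
    · intro V hV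
      simp only [mem_filter, mem_univ, true_and] at hV
      exact Finset.sdiff_union_of_subset hV.2
    · intro W hW
      rw [Finset.mem_powersetCard] at hW
      have : Disjoint W T := by
        refine Finset.disjoint_left.2 fun a ha hat => ?_
        have := hW.1 ha
        simp [Finset.mem_sdiff] at this
        exact this hat
      exact Finset.union_sdiff_cancel_right this

lemma delta_sum {N : ℕ} (S Q : Finset (Fin N)) (hSQ : S ⊆ Q) :
    ∑ R ∈ Finset.univ.filter (fun R => S ⊆ R ∧ R ⊆ Q), (-1 : ℤ) ^ (R.card - S.card)
      = if Q = S then 1 else 0 := by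
  classical
  have heq : (Q = S) ↔ (Q \ S = ∅) := by
    rw [Finset.sdiff_eq_empty_iff_subset]
    exact ⟨fun h => h ▸ le_rfl, fun h => le_antisymm h hSQ⟩
  rw [if_congr heq rfl rfl, ← Finset.sum_powerset_neg_one_pow_card (x := Q \ S)]
  apply Finset.sum_bij' (fun R _ => R \ S) (fun W _ => W ∪ S)
  · intro R hR
    simp only [mem_filter, mem_univ, true_and] at hR
    rw [Finset.mem_powerset]
    exact Finset.sdiff_subset_sdiff hR.2 le_rfl
  · intro W hW
    rw [Finset.mem_powerset] at hW
    simp only [mem_filter, mem_univ, true_and]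
    exact ⟨Finset.subset_union_right, Finset.union_subset ((Finset.subset_sdiff.1 hW).1) hSQ⟩
  · intro R hR
    simp only [mem_filter, mem_univ, true_and] at hR
    exact Finset.sdiff_union_of_subset hR.1
  · intro W hW
    rw [Finset.mem_powerset] at hW
    have : Disjoint W S := Finset.disjoint_left.2 fun a ha => by
      have := hW ha; simp [Finset.mem_sdiff] at this; exact this.2
    exact Finset.union_sdiff_cancel_right this
  · intro R hR
    simp only [mem_filter, mem_univ, true_and] at hR
    rw [Finset.card_sdiff_of_subset hR.1]

lemma Bcard_eq_prod {N L : ℕ} (m : Fin L → ℕ) (T : Finset (Fin N))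
    (h : ∀ j, T.card ≤ m j) :
    Bcard N L m T = ∏ j, (N - T.card).choose (m j - T.card) := by
  unfold Bcard
  have : (Finset.univ.filter (fun U : Fin L → Finset (Fin N) =>
      ∀ j, (U j).card = m j ∧ T ⊆ U j))
      = Fintype.piFinset (fun j => Finset.univ.filter
          (fun V : Finset (Fin N) => V.card = m j ∧ T ⊆ V)) := by
    ext U
    simp [Fintype.mem_piFinset]
  rw [this, Fintype.card_piFinset]
  exact Finset.prod_congr rfl fun j _ => card_supersets T (m j) (h j)

lemma Bcard_eq_zero {N L : ℕ} (m : Fin L → ℕ) (T : Finset (Fin N))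
    (j : Fin L) (h : m j < T.card) : Bcard N L m T = 0 := by
  unfold Bcard
  rw [Finset.card_eq_zero, Finset.filter_eq_empty_iff]
  intro U _
  intro hU
  have := (hU j).1
  have := Finset.card_le_card (hU j).2
  omega

lemma Bcard_eq_sum_Acard {N L : ℕ} (m : Fin L → ℕ) (T : Finset (Fin N)) :
    Bcard N L m T = ∑ R ∈ Finset.univ.filter (fun R => T ⊆ R), Acard N L m R := by
  unfold Bcard Acard
  rw [Finset.card_eq_sum_card_fiberwise
    (f := fun U : Fin L → Finset (Fin N) => Finset.univ.inf U)
    (t := Finset.univ.filter (fun R => T ⊆ R))]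
  · apply Finset.sum_congr rfl
    intro R hR
    simp only [Finset.mem_filter, Finset.mem_univ, true_and] at hR
    rw [Finset.filter_filter]
    congr 1
    apply Finset.filter_congr
    intro U _
    constructor
    · rintro ⟨h1, h2⟩
      exact ⟨fun j => (h1 j).1, h2⟩
    · rintro ⟨h1, h2⟩
      refine ⟨fun j => ⟨h1 j, ?_⟩, h2⟩
      exact hR.trans (h2 ▸ Finset.inf_le (Finset.mem_univ j))
  · intro U hU
    simp only [Finset.mem_coe, Finset.mem_filter, Finset.mem_univ, true_and] at hU ⊢
    exact Finset.le_inf fun j _ => (hU j).2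

lemma Acard_inv {N L : ℕ} (m : Fin L → ℕ) (S : Finset (Fin N)) :
    (Acard N L m S : ℤ)
      = ∑ R ∈ Finset.univ.filter (fun R => S ⊆ R),
          (-1 : ℤ) ^ (R.card - S.card) * (Bcard N L m R : ℤ) := by
  have hB : ∀ R : Finset (Fin N), (Bcard N L m R : ℤ)
      = ∑ Q ∈ Finset.univ.filter (fun Q => R ⊆ Q), (Acard N L m Q : ℤ) := by
    intro R
    rw [Bcard_eq_sum_Acard]
    push_cast
    rfl
  symm
  calc
    ∑ R ∈ Finset.univ.filter (fun R => S ⊆ R),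
        (-1:ℤ)^(R.card-S.card) * (Bcard N L m R : ℤ)
      = ∑ R : Finset (Fin N), ∑ Q : Finset (Fin N),
          (if S ⊆ R ∧ R ⊆ Q then (-1:ℤ)^(R.card-S.card) * (Acard N L m Q : ℤ) else 0) := by
        rw [Finset.sum_filter]
        apply Finset.sum_congr rfl; intro R _
        by_cases hSR : S ⊆ R
        · simp only [hSR, if_true, true_and, hB R, Finset.mul_sum, Finset.sum_filter,
            mul_ite, mul_zero]
        · simp [hSR]
    _ = ∑ Q : Finset (Fin N),
          (∑ R ∈ Finset.univ.filter (fun R => S ⊆ R ∧ R ⊆ Q),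
            (-1:ℤ)^(R.card - S.card)) * (Acard N L m Q : ℤ) := by
        rw [Finset.sum_comm]
        apply Finset.sum_congr rfl; intro Q _
        rw [Finset.sum_filter, Finset.sum_mul]
        apply Finset.sum_congr rfl; intro R _
        split_ifs <;> simp
    _ = ∑ Q : Finset (Fin N), (if Q = S then 1 else 0) * (Acard N L m Q : ℤ) := by
        apply Finset.sum_congr rfl; intro Q _
        congr 1
        by_cases hSQ : S ⊆ Q
        · exact delta_sum S Q hSQ
        · rw [if_neg (fun h : Q = S => hSQ (by rw [h])), Finset.filter_false_of_mem,
            Finset.sum_empty]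
          intro R _
          exact fun hR => hSQ (hR.1.trans hR.2)
    _ = (Acard N L m S : ℤ) := by
        simp [ite_mul]

lemma Acard_formula {N L : ℕ} (hL : 0 < L) (m : Fin L → ℕ) (μ : ℕ)
    (hμm : ∀ j, μ ≤ m j) (hmN : ∀ j, m j ≤ N)
    (S : Finset (Fin N)) (hS : S.card = μ) :
    (Acard N L m S : ℤ)
      = ∑ l ∈ Finset.range (minOver hL (fun j => m j - μ) + 1),
          (-1 : ℤ) ^ l * ((N - μ).choose l : ℤ) *
            ∏ j, ((N - μ - l).choose (m j - μ - l) : ℤ) := by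
  have hScard : (Finset.univ \ S).card = N - μ := by
    rw [Finset.card_sdiff_of_subset (Finset.subset_univ _), Finset.card_univ, Fintype.card_fin, hS]
  have hmin_le : ∀ j, minOver hL (fun j => m j - μ) ≤ m j - μ :=
    fun j => Finset.inf'_le _ (Finset.mem_univ j)
  have hj0 : minOver hL (fun j => m j - μ) ≤ N - μ := by
    have := hmin_le ⟨0, hL⟩
    have := hμm ⟨0, hL⟩
    have := hmN ⟨0, hL⟩
    omega
  rw [Acard_inv]
  have step1 : ∑ R ∈ Finset.univ.filter (fun R => S ⊆ R),
      (-1 : ℤ) ^ (R.card - S.card) * (Bcard N L m R : ℤ)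
      = ∑ W ∈ (Finset.univ \ S).powerset,
          (-1 : ℤ) ^ W.card * (Bcard N L m (S ∪ W) : ℤ) := by
    apply Finset.sum_bij' (fun R _ => R \ S) (fun W _ => S ∪ W)
    · intro R hR
      simp only [Finset.mem_filter, Finset.mem_univ, true_and] at hR
      rw [Finset.mem_powerset]
      exact Finset.sdiff_subset_sdiff (Finset.subset_univ _) le_rfl
    · intro W hW
      simp only [Finset.mem_filter, Finset.mem_univ, true_and]
      exact Finset.subset_union_left
    · intro R hR
      simp only [Finset.mem_filter, Finset.mem_univ, true_and] at hR
      exact Finset.union_sdiff_of_subset hR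
    · intro W hW
      rw [Finset.mem_powerset] at hW
      have hdisj : Disjoint S W := Finset.disjoint_left.2 fun a ha haW => by
        have := hW haW
        simp only [Finset.mem_sdiff] at this
        exact this.2 ha
      exact Finset.union_sdiff_cancel_left hdisj
    · intro R hR
      simp only [Finset.mem_filter, Finset.mem_univ, true_and] at hR
      rw [Finset.card_sdiff_of_subset hR, hS, Finset.union_sdiff_of_subset hR]
  rw [step1, Finset.sum_powerset, hScard]
  have inner : ∀ l, l ≤ N - μ →
      ∑ W ∈ Finset.powersetCard l (Finset.univ \ S),
        (-1 : ℤ) ^ W.card * (Bcard N L m (S ∪ W) : ℤ)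
      = if l ≤ minOver hL (fun j => m j - μ) then
          (-1 : ℤ) ^ l * ((N - μ).choose l : ℤ) *
            ∏ j, ((N - μ - l).choose (m j - μ - l) : ℤ)
        else 0 := by
    intro l hlN
    have key : ∀ W ∈ Finset.powersetCard l (Finset.univ \ S),
        (S ∪ W).card = μ + l ∧ W.card = l := by
      intro W hW
      rw [Finset.mem_powersetCard] at hW
      have hdisj : Disjoint S W := Finset.disjoint_left.2 fun a ha haW => by
        have := hW.1 haW
        simp only [Finset.mem_sdiff] at this
        exact this.2 ha
      rw [Finset.card_union_of_disjoint hdisj, hS, hW.2]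
      exact ⟨rfl, rfl⟩
    by_cases hcase : l ≤ minOver hL (fun j => m j - μ)
    · rw [if_pos hcase]
      have hval : ∀ W ∈ Finset.powersetCard l (Finset.univ \ S),
          (-1 : ℤ) ^ W.card * (Bcard N L m (S ∪ W) : ℤ)
          = (-1 : ℤ) ^ l * ∏ j, ((N - μ - l).choose (m j - μ - l) : ℤ) := by
        intro W hW
        obtain ⟨hc, hcW⟩ := key W hW
        rw [hcW, Bcard_eq_prod m (S ∪ W) (fun j => by
          have h1 := hmin_le j
          have h2 := hμm j
          omega)]
        push_cast
        congr 1
        apply Finset.prod_congr rfl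
        intro j _
        simp [hc, Nat.sub_sub]
      rw [Finset.sum_congr rfl hval, Finset.sum_const, Finset.card_powersetCard, hScard]
      push_cast
      ring
    · rw [if_neg hcase]
      apply Finset.sum_eq_zero
      intro W hW
      obtain ⟨hc, _⟩ := key W hW
      obtain ⟨j0, hj0'⟩ : ∃ j, m j - μ < l := by
        by_contra hcon
        push_neg at hcon
        exact hcase (Finset.le_inf' _ _ fun j _ => hcon j)
      rw [Bcard_eq_zero m (S ∪ W) j0 (by have := hμm j0; omega)]
      simp
  calc
    ∑ l ∈ Finset.range (N - μ + 1),
        ∑ W ∈ Finset.powersetCard l (Finset.univ \ S),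
          (-1 : ℤ) ^ W.card * (Bcard N L m (S ∪ W) : ℤ)
      = ∑ l ∈ Finset.range (N - μ + 1),
          (if l ≤ minOver hL (fun j => m j - μ) then
            (-1 : ℤ) ^ l * ((N - μ).choose l : ℤ) *
              ∏ j, ((N - μ - l).choose (m j - μ - l) : ℤ)
          else 0) := by
        apply Finset.sum_congr rfl
        intro l hl
        rw [Finset.mem_range] at hl
        exact inner l (by omega)
    _ = ∑ l ∈ Finset.range (minOver hL (fun j => m j - μ) + 1),
          (-1 : ℤ) ^ l * ((N - μ).choose l : ℤ) *
            ∏ j, ((N - μ - l).choose (m j - μ - l) : ℤ) := by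
        rw [← Finset.sum_filter]
        apply Finset.sum_congr
        · ext l
          simp only [Finset.mem_filter, Finset.mem_range]
          omega
        · intro l _
          rfl


/-- counting identity for `α_L`: the number of `L`-tuples `(U 1, …, U L)` of
subsets of `Fin N` with `|U j| = m j` for every `j` and `|⋂ j, U j| = μ` equals
`C(N,μ) Σ_{l=0}^{min_j(m_j-μ)} (-1)^l C(N-μ,l) ∏_j C(N-μ-l, m_j-μ-l)`. -/
theorem stmt8 (N L : ℕ) (hL : 0 < L) (m : Fin L → ℕ) (μ : ℕ)
    (hμm : ∀ j, μ ≤ m j) (hmN : ∀ j, m j ≤ N) :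
    ((Finset.univ.filter (fun U : Fin L → Finset (Fin N) =>
          (∀ j, (U j).card = m j) ∧ (Finset.univ.inf U).card = μ)).card : ℤ)
      = (N.choose μ : ℤ) *
          ∑ l ∈ Finset.range (minOver hL (fun j => m j - μ) + 1),
            (-1 : ℤ) ^ l * ((N - μ).choose l : ℤ) *
              ∏ j, ((N - μ - l).choose (m j - μ - l) : ℤ) := by
  have hfib : (Finset.univ.filter (fun U : Fin L → Finset (Fin N) =>
          (∀ j, (U j).card = m j) ∧ (Finset.univ.inf U).card = μ)).card
      = ∑ S ∈ Finset.powersetCard μ (Finset.univ : Finset (Fin N)), Acard N L m S := by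
    rw [Finset.card_eq_sum_card_fiberwise
      (f := fun U : Fin L → Finset (Fin N) => Finset.univ.inf U)
      (t := Finset.powersetCard μ Finset.univ)]
    · apply Finset.sum_congr rfl
      intro S hS
      rw [Finset.mem_powersetCard] at hS
      rw [Finset.filter_filter]
      unfold Acard
      congr 1
      apply Finset.filter_congr
      intro U _
      constructor
      · rintro ⟨⟨h1, _⟩, h2⟩
        exact ⟨h1, h2⟩
      · rintro ⟨h1, h2⟩
        exact ⟨⟨h1, by rw [h2, hS.2]⟩, h2⟩
    · intro U hU
      simp only [Finset.mem_coe, Finset.mem_filter, Finset.mem_univ, true_and] at hU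
      rw [Finset.mem_coe, Finset.mem_powersetCard]
      exact ⟨Finset.subset_univ _, hU.2⟩
  rw [hfib]
  push_cast
  rw [Finset.sum_congr rfl (fun S hS => Acard_formula hL m μ hμm hmN S
    ((Finset.mem_powersetCard.1 hS).2)), Finset.sum_const, Finset.card_powersetCard,
    Finset.card_univ, Fintype.card_fin, nsmul_eq_mul]
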